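/- There exist a constant C > 0 and a constant δ with 0 < δ < 1 such that |κ₁,ₙ| + |κ₂,ₙ| ≤ C·δⁿ for all n ≥ 1. -/

import Mathlib

theorem kappa_geometric_decay
    (z₁ z₂ : ℂ) (hz : z₁ ≠ z₂) (ρ ρ₁ ρ₂ : ℝ)
    (hρ : ρ = ‖z₁ - z₂‖)
    (hρ₁ : 0 < ρ₁) (hρ₂ : 0 < ρ₂) (hsum : ρ₁ + ρ₂ < ρ)
    (Λ₁ Λ₂ Λ : ℝ) (hΛ₁ : Λ₁ = (ρ₁ / ρ) ^ 2) (hΛ₂ : Λ₂ = (ρ₂ / ρ) ^ 2)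
    (hΛ : Λ = (Λ₁ - Λ₂) ^ 2 + 1 - 2 * (Λ₁ + Λ₂))
    (l₁ l₂ : ℕ → ℝ) (hl₁0 : l₁ 0 = 1) (hl₂0 : l₂ 0 = 1)
    (hl₁ : ∀ n : ℕ, l₁ (n + 1) = 1 - Λ₂ / l₂ n)
    (hl₂ : ∀ n : ℕ, l₂ (n + 1) = 1 - Λ₁ / l₁ n)
    (κ₁ κ₂ : ℕ → ℂ)
    (hκ₁1 : κ₁ 1 = ((2 * ρ₂ ^ 2 : ℝ) : ℂ))
    (hκ₁2 : κ₁ 2 = -(2 * (((ρ₁ * ρ₂ : ℝ)) : ℂ) ^ 2) / (starRingEnd ℂ (z₂ - z₁)) ^ 2)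
    (hκ₁rec : ∀ n : ℕ, 1 ≤ n →
      κ₁ (n + 2) = ((Λ₁ * Λ₂ / (l₂ n * l₁ (n - 1)) ^ 2 : ℝ) : ℂ) * κ₁ n)
    (hκ₂1 : κ₂ 1 = ((2 * ρ₁ ^ 2 : ℝ) : ℂ))
    (hκ₂2 : κ₂ 2 = -(2 * (((ρ₁ * ρ₂ : ℝ)) : ℂ) ^ 2) / (starRingEnd ℂ (z₁ - z₂)) ^ 2)
    (hκ₂rec : ∀ n : ℕ, 1 ≤ n →
      κ₂ (n + 2) = ((Λ₁ * Λ₂ / (l₁ n * l₂ (n - 1)) ^ 2 : ℝ) : ℂ) * κ₂ n) :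
    ∃ C : ℝ, 0 < C ∧ ∃ δ : ℝ, 0 < δ ∧ δ < 1 ∧
      ∀ n : ℕ, 1 ≤ n → ‖κ₁ n‖ + ‖κ₂ n‖ ≤ C * δ ^ n := by
  have hρpos : 0 < ρ := by linarith
  set a := ρ₁ / ρ with ha_def
  set b := ρ₂ / ρ with hb_def
  have ha : 0 < a := div_pos hρ₁ hρpos
  have hb : 0 < b := div_pos hρ₂ hρpos
  have hab : a + b < 1 := by
    rw [ha_def, hb_def, ← add_div]
    exact (div_lt_one hρpos).mpr hsum
  have h1a : 0 < 1 - a := by linarith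
  have h1b : 0 < 1 - b := by linarith
  -- lower bounds for l₁, l₂
  have hlb : ∀ n : ℕ, 1 - b ≤ l₁ n ∧ 1 - a ≤ l₂ n := by
    intro n
    induction n with
    | zero => rw [hl₁0, hl₂0]; constructor <;> linarith
    | succ n ih =>
      obtain ⟨ih1, ih2⟩ := ih
      have hl2pos : 0 < l₂ n := lt_of_lt_of_le h1a ih2
      have hl1pos : 0 < l₁ n := lt_of_lt_of_le h1b ih1
      constructor
      · rw [hl₁ n, hΛ₂]
        have h1 : b ^ 2 / l₂ n ≤ b ^ 2 / (1 - a) := by gcongr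
        have h2 : b ^ 2 / (1 - a) ≤ b := by
          rw [div_le_iff₀ h1a]; nlinarith
        linarith
      · rw [hl₂ n, hΛ₁]
        have h1 : a ^ 2 / l₁ n ≤ a ^ 2 / (1 - b) := by gcongr
        have h2 : a ^ 2 / (1 - b) ≤ a := by
          rw [div_le_iff₀ h1b]; nlinarith
        linarith
  set δ : ℝ := a * b / ((1 - a) * (1 - b)) with hδ_def
  have hδpos : 0 < δ := by positivity
  have hδlt1 : δ < 1 := by
    rw [hδ_def, div_lt_one (by positivity)]
    nlinarith
  have hδne : δ ≠ 0 := ne_of_gt hδpos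
  -- the recursion factor is bounded by δ²
  have key : ∀ t : ℝ, (1 - a) * (1 - b) ≤ t → Λ₁ * Λ₂ / t ^ 2 ≤ δ ^ 2 := by
    intro t ht
    have ht0 : 0 < t := lt_of_lt_of_le (by positivity) ht
    calc Λ₁ * Λ₂ / t ^ 2 = (a * b) ^ 2 / t ^ 2 := by
          rw [hΛ₁, hΛ₂, mul_pow]
      _ ≤ (a * b) ^ 2 / ((1 - a) * (1 - b)) ^ 2 := by gcongr <;> positivity
      _ = δ ^ 2 := by rw [hδ_def, div_pow]
  have hΛΛnn : 0 ≤ Λ₁ * Λ₂ := by rw [hΛ₁, hΛ₂]; positivity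
  -- general decay lemma
  have decay : ∀ κ : ℕ → ℂ,
      (∀ n : ℕ, 1 ≤ n → ‖κ (n + 2)‖ ≤ δ ^ 2 * ‖κ n‖) →
      ∀ n : ℕ, 1 ≤ n → ‖κ n‖ ≤
        max (‖κ 1‖ / δ) (‖κ 2‖ / δ ^ 2) * δ ^ n := by
    intro κ hrec n
    induction n using Nat.strong_induction_on with
    | _ n ih =>
      intro hn
      match n, hn with
      | 1, _ =>
        have h := le_max_left (‖κ 1‖ / δ) (‖κ 2‖ / δ ^ 2)
        calc ‖κ 1‖ = (‖κ 1‖ / δ) * δ ^ 1 := by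
              field_simp
          _ ≤ _ := by gcongr
      | 2, _ =>
        have h := le_max_right (‖κ 1‖ / δ) (‖κ 2‖ / δ ^ 2)
        calc ‖κ 2‖ = (‖κ 2‖ / δ ^ 2) * δ ^ 2 := by
              field_simp
          _ ≤ _ := by gcongr
      | (m + 3), _ =>
        have h1 : ‖κ (m + 1 + 2)‖ ≤ δ ^ 2 * ‖κ (m + 1)‖ :=
          hrec (m + 1) (by omega)
        have h2 := ih (m + 1) (by omega) (by omega)
        calc ‖κ (m + 3)‖ ≤ δ ^ 2 * ‖κ (m + 1)‖ := h1
          _ ≤ δ ^ 2 * (max (‖κ 1‖ / δ) (‖κ 2‖ / δ ^ 2)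
              * δ ^ (m + 1)) := by gcongr
          _ = max (‖κ 1‖ / δ) (‖κ 2‖ / δ ^ 2) * δ ^ (m + 3) := by
              ring
  have hrec₁ : ∀ n : ℕ, 1 ≤ n → ‖κ₁ (n + 2)‖ ≤ δ ^ 2 * ‖κ₁ n‖ := by
    intro n hn
    rw [hκ₁rec n hn, norm_mul, Complex.norm_real, Real.norm_eq_abs,
      abs_of_nonneg (div_nonneg hΛΛnn (sq_nonneg _))]
    have hprod : (1 - a) * (1 - b) ≤ l₂ n * l₁ (n - 1) :=
      mul_le_mul (hlb n).2 (hlb (n - 1)).1 (le_of_lt h1b)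
        (le_trans (le_of_lt h1a) (hlb n).2)
    exact mul_le_mul_of_nonneg_right (key _ hprod) (norm_nonneg _)
  have hrec₂ : ∀ n : ℕ, 1 ≤ n → ‖κ₂ (n + 2)‖ ≤ δ ^ 2 * ‖κ₂ n‖ := by
    intro n hn
    rw [hκ₂rec n hn, norm_mul, Complex.norm_real, Real.norm_eq_abs,
      abs_of_nonneg (div_nonneg hΛΛnn (sq_nonneg _))]
    have hprod : (1 - a) * (1 - b) ≤ l₁ n * l₂ (n - 1) := by
      have := mul_le_mul (hlb (n - 1)).2 (hlb n).1 (le_of_lt h1b)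
        (le_trans (le_of_lt h1a) (hlb (n - 1)).2)
      nlinarith
    exact mul_le_mul_of_nonneg_right (key _ hprod) (norm_nonneg _)
  set C₁ : ℝ := max (‖κ₁ 1‖ / δ) (‖κ₁ 2‖ / δ ^ 2) with hC₁
  set C₂ : ℝ := max (‖κ₂ 1‖ / δ) (‖κ₂ 2‖ / δ ^ 2) with hC₂
  have hb₁ := decay κ₁ hrec₁
  have hb₂ := decay κ₂ hrec₂
  have hC₁pos : 0 < C₁ := by
    have hne : κ₁ 1 ≠ 0 := by
      rw [hκ₁1]
      exact_mod_cast Complex.ofReal_ne_zero.mpr (by positivity)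
    have : 0 < ‖κ₁ 1‖ / δ := div_pos (norm_pos_iff.mpr hne) hδpos
    exact lt_of_lt_of_le this (le_max_left _ _)
  have hC₂pos : 0 < C₂ := by
    have hne : κ₂ 1 ≠ 0 := by
      rw [hκ₂1]
      exact_mod_cast Complex.ofReal_ne_zero.mpr (by positivity)
    have : 0 < ‖κ₂ 1‖ / δ := div_pos (norm_pos_iff.mpr hne) hδpos
    exact lt_of_lt_of_le this (le_max_left _ _)
  refine ⟨C₁ + C₂, by linarith, δ, hδpos, hδlt1, fun n hn => ?_⟩
  have h1 := hb₁ n hn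
  have h2 := hb₂ n hn
  have := add_le_add h1 h2
  calc ‖κ₁ n‖ + ‖κ₂ n‖ ≤ C₁ * δ ^ n + C₂ * δ ^ n := this
    _ = (C₁ + C₂) * δ ^ n := by ring
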